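/- Let c ∈ ℝⁿ have nonnegative entries, let a ∈ ℝ^d, and set A = c aᵀ ∈ ℝ^{n×d} (a rank-one data matrix with nonnegative left factor). Then A is spike-free. -/

import Mathlib

open Finset Matrix

/-- Euclidean (ℓ2) norm of a finite-dimensional real vector. -/
noncomputable def l2norm {k : ℕ} (x : Fin k → ℝ) : ℝ := Real.sqrt (∑ i, x i ^ 2)

/-- Entrywise ReLU of a vector. -/
def reluV {k : ℕ} (x : Fin k → ℝ) : Fin k → ℝ := fun i => max (x i) 0

/-- `A` is spike-free if `{(Au)_+ : u ∈ B₂} = {Au : u ∈ B₂} ∩ ℝ₊ⁿ`. -/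
def IsSpikeFree {n d : ℕ} (A : Matrix (Fin n) (Fin d) ℝ) : Prop :=
  {x : Fin n → ℝ | ∃ u, l2norm u ≤ 1 ∧ x = reluV (A.mulVec u)} =
    {x : Fin n → ℝ | ∃ u, l2norm u ≤ 1 ∧ x = A.mulVec u} ∩ {x | ∀ i, 0 ≤ x i}

lemma mulVec_rankone {n d : ℕ} (c : Fin n → ℝ) (a : Fin d → ℝ) (u : Fin d → ℝ) (i : Fin n) :
    (Matrix.of fun i j => c i * a j).mulVec u i = c i * ∑ j, a j * u j := by
  simp [Matrix.mulVec, dotProduct, Finset.mul_sum, mul_assoc]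

/-- A rank-one matrix `A = c aᵀ` with nonnegative left factor `c` is spike-free. -/
theorem stmt4 {n d : ℕ} (c : Fin n → ℝ) (hc : ∀ i, 0 ≤ c i) (a : Fin d → ℝ) :
    IsSpikeFree (Matrix.of fun i j => c i * a j) := by
  ext x
  constructor
  · rintro ⟨u, hu, rfl⟩
    set t := ∑ j, a j * u j with ht
    by_cases h : 0 ≤ t
    · refine ⟨⟨u, hu, funext fun i => ?_⟩, fun i => ?_⟩
      · simp [reluV, mulVec_rankone, max_eq_left (mul_nonneg (hc i) h)]
        exact mul_nonneg (hc i) h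
      · simp [reluV]
    · refine ⟨⟨0, ?_, funext fun i => ?_⟩, fun i => ?_⟩
      · simp [l2norm]
      · have : c i * t ≤ 0 := mul_nonpos_of_nonneg_of_nonpos (hc i) (le_of_not_ge h)
        simp [reluV, mulVec_rankone, max_eq_right this, Matrix.mulVec_zero]
        exact this
      · simp [reluV]
  · rintro ⟨⟨u, hu, rfl⟩, hx⟩
    exact ⟨u, hu, funext fun i => (max_eq_left (hx i)).symm⟩
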